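/- Under the setup, suppose D₁ ≥ D₀ almost surely, for all d, z ∈ {0,1} the pair (Z, W) is conditionally independent of Y_{d,z} given (D₁, D₀), Z is conditionally independent of (D₁, D₀) given W, P(Z = 0, W = w) > 0, and P(AT) > 0. Then E[Y·D | Z = 0, W = w] = E[Y_{1,0} | AT]·P(AT | W = w). -/

import Mathlib

open MeasureTheory ProbabilityTheory

/-- `pr μ A` is the probability of the event `A`, as a real number. -/
noncomputable def pr {Ω : Type*} [MeasurableSpace Ω] (μ : Measure Ω) (A : Set Ω) : ℝ :=
  (μ A).toReal

/-- `prCond μ A B` is the conditional probability `P(A | B) = P(A ∩ B) / P(B)`. -/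
noncomputable def prCond {Ω : Type*} [MeasurableSpace Ω] (μ : Measure Ω) (A B : Set Ω) : ℝ :=
  pr μ (A ∩ B) / pr μ B

/-- `cexp μ A f` is the conditional expectation `E[f | A]` of `f` given the event `A`. -/
noncomputable def cexp {Ω : Type*} [MeasurableSpace Ω] (μ : Measure Ω) (A : Set Ω)
    (f : Ω → ℝ) : ℝ :=
  ∫ ω, f ω ∂(μ[|A])

/-- The event `{ω | f ω = c}`. -/
def evEq {Ω : Type*} (f : Ω → ℝ) (c : ℝ) : Set Ω := {ω | f ω = c}

/-- Always takers: `D₁ = D₀ = 1`. -/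
def ATset {Ω : Type*} (D1 D0 : Ω → ℝ) : Set Ω := {ω | D1 ω = 1 ∧ D0 ω = 1}

/-- Never takers: `D₁ = D₀ = 0`. -/
def NTset {Ω : Type*} (D1 D0 : Ω → ℝ) : Set Ω := {ω | D1 ω = 0 ∧ D0 ω = 0}

/-- Compliers: `D₁ = 1`, `D₀ = 0`. -/
def CPset {Ω : Type*} (D1 D0 : Ω → ℝ) : Set Ω := {ω | D1 ω = 1 ∧ D0 ω = 0}

lemma cexp_eq_inv_mul {Ω : Type*} [MeasurableSpace Ω] (μ : Measure Ω) (B : Set Ω) (f : Ω → ℝ) :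
    cexp μ B f = (μ B).toReal⁻¹ * ∫ ω in B, f ω ∂μ := by
  rw [cexp, ProbabilityTheory.cond, integral_smul_measure, ENNReal.toReal_inv, smul_eq_mul]

/-- `E[Y·D | Z = 0, W = w]` only involves always takers. -/
theorem YD_given_Z0_decomposition
    {Ω : Type*} [MeasurableSpace Ω] (μ : Measure Ω) [IsProbabilityMeasure μ]
    (Y : Fin 2 → Fin 2 → Ω → ℝ) (D1 D0 Z W : Ω → ℝ)
    (hYint : ∀ d z, Integrable (Y d z) μ) (hYmeas : ∀ d z, Measurable (Y d z))
    (hD1v : ∀ ω, D1 ω = 0 ∨ D1 ω = 1) (hD0v : ∀ ω, D0 ω = 0 ∨ D0 ω = 1)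
    (hZv : ∀ ω, Z ω = 0 ∨ Z ω = 1) (hWv : ∀ ω, W ω = 0 ∨ W ω = 1)
    (hD1m : Measurable D1) (hD0m : Measurable D0) (hZm : Measurable Z) (hWm : Measurable W)
    (D : Ω → ℝ) (hD : ∀ ω, D ω = D1 ω * Z ω + D0 ω * (1 - Z ω))
    (Yo : Ω → ℝ)
    (hYo : ∀ ω, Yo ω = (Y 1 1 ω * Z ω + Y 1 0 ω * (1 - Z ω)) * D ω
      + (Y 0 1 ω * Z ω + Y 0 0 ω * (1 - Z ω)) * (1 - D ω))
    (hmono : ∀ᵐ ω ∂μ, D0 ω ≤ D1 ω)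
    (hCI1 : ∀ (d z : Fin 2) (i j : ℝ),
      IndepFun (fun ω => (Z ω, W ω)) (Y d z) (μ[|{ω | D1 ω = i ∧ D0 ω = j}]))
    (hCI2 : ∀ w' : ℝ, IndepFun Z (fun ω => (D1 ω, D0 ω)) (μ[|evEq W w']))
    (w : ℝ) (hw : w = 0 ∨ w = 1)
    (hpos : 0 < pr μ (evEq Z 0 ∩ evEq W w))
    (hAT : 0 < pr μ (ATset D1 D0)) :
    cexp μ (evEq Z 0 ∩ evEq W w) (fun ω => Yo ω * D ω)
      = cexp μ (ATset D1 D0) (fun ω => Y 1 0 ω) * prCond μ (ATset D1 D0) (evEq W w) := by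
  set A : Set Ω := ATset D1 D0 with hA
  set Sc : Set Ω := evEq Z 0 ∩ evEq W w with hSc
  have hZ0m : MeasurableSet (evEq Z 0) := hZm (measurableSet_singleton 0)
  have hWwm : MeasurableSet (evEq W w) := hWm (measurableSet_singleton w)
  have hScm : MeasurableSet Sc := hZ0m.inter hWwm
  have hAm : MeasurableSet A :=
    (hD1m (measurableSet_singleton 1)).inter (hD0m (measurableSet_singleton 1))
  -- real-valued probabilities
  set c : ℝ := (μ Sc).toReal with hc
  set p : ℝ := (μ A).toReal with hp
  set m : ℝ := (μ (evEq W w)).toReal with hm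
  set b : ℝ := (μ (A ∩ evEq W w)).toReal with hb
  set a : ℝ := (μ (A ∩ Sc)).toReal with ha
  have hcpos : 0 < c := hpos
  have hppos : 0 < p := hAT
  have hmpos : 0 < m := by
    have : μ Sc ≤ μ (evEq W w) := measure_mono Set.inter_subset_right
    have h2 : c ≤ m := ENNReal.toReal_mono (measure_ne_top _ _) this
    linarith
  -- Step A: conditional expectation as set integral
  rw [cexp_eq_inv_mul, ← hc]
  -- Step B: on Sc, Yo * D = indicator of A times Y 1 0, a.e.
  have hB : ∫ ω in Sc, Yo ω * D ω ∂μ = ∫ ω in Sc, A.indicator (Y 1 0) ω ∂μ := by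
    refine setIntegral_congr_ae hScm ?_
    filter_upwards [hmono] with ω hmω hω
    have hZ0 : Z ω = 0 := hω.1
    rcases hD0v ω with h0 | h0
    · have hnA : ω ∉ A := by
        intro hmem
        have h2 : D0 ω = 1 := hmem.2
        rw [h0] at h2; norm_num at h2
      rw [Set.indicator_of_notMem hnA, hYo, hD, hZ0, h0]; ring
    · have h1 : D1 ω = 1 := by
        rcases hD1v ω with h | h
        · rw [h0, h] at hmω; linarith
        · exact h
      have hmem : ω ∈ A := ⟨h1, h0⟩
      rw [Set.indicator_of_mem hmem, hYo, hD, hZ0, h0]; ring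
  rw [hB, setIntegral_indicator hAm]
  -- Step C: independence gives ∫_{Sc ∩ A} Y10 dμ = a * cexp μ A Y10
  have hind : IndepFun (Sc.indicator (1 : Ω → ℝ)) (Y 1 0) (μ[|A]) := by
    have h : IndepFun ((({((0:ℝ), w)} : Set (ℝ × ℝ)).indicator (1 : ℝ × ℝ → ℝ)) ∘
        (fun ω => (Z ω, W ω))) ((id : ℝ → ℝ) ∘ (Y 1 0)) (μ[|A]) :=
      (hCI1 1 0 1 1).comp
        ((measurable_const.indicator (measurableSet_singleton _)) : Measurable
          (({((0:ℝ), w)} : Set (ℝ × ℝ)).indicator (1 : ℝ × ℝ → ℝ))) measurable_id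
    convert h using 1
    funext ω
    simp only [Function.comp_apply]
    by_cases hmem : ω ∈ Sc
    · rw [Set.indicator_of_mem hmem, Set.indicator_of_mem (by
        simp only [Set.mem_singleton_iff, Prod.ext_iff]
        exact ⟨hmem.1, hmem.2⟩ : (Z ω, W ω) ∈ ({((0:ℝ), w)} : Set (ℝ × ℝ)))]
      rfl
    · rw [Set.indicator_of_notMem hmem, Set.indicator_of_notMem (by
        simp only [Set.mem_singleton_iff, Prod.ext_iff]
        intro hcon; exact hmem ⟨hcon.1, hcon.2⟩ : (Z ω, W ω) ∉ ({((0:ℝ), w)} : Set (ℝ × ℝ)))]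
    rfl
  have hmul := hind.integral_mul_eq_mul_integral
    ((measurable_const.indicator hScm).aestronglyMeasurable)
    ((hYmeas 1 0).aestronglyMeasurable)
  -- rewrite both sides of hmul
  have hprod : (Sc.indicator (1 : Ω → ℝ)) * (Y 1 0) = Sc.indicator (Y 1 0) := by
    funext ω
    by_cases h : ω ∈ Sc <;> simp [Set.indicator, h]
  rw [hprod, integral_indicator hScm, integral_indicator_one hScm] at hmul
  -- LHS of hmul: set integral over cond measure
  have hcondint : ∫ ω in Sc, Y 1 0 ω ∂(μ[|A]) = p⁻¹ * ∫ ω in Sc ∩ A, Y 1 0 ω ∂μ := by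
    rw [ProbabilityTheory.cond, Measure.restrict_smul,
      Measure.restrict_restrict hScm, integral_smul_measure, ENNReal.toReal_inv, smul_eq_mul]
  have hnuSc : ((μ[|A]) Sc).toReal = p⁻¹ * a := by
    rw [cond_apply hAm, ENNReal.toReal_mul, ENNReal.toReal_inv]
  rw [hcondint, measureReal_def, hnuSc] at hmul
  -- Step D: hCI2 gives a = c * b / m
  have hD2 : a = c * b / m := by
    have h := (hCI2 w).measure_inter_preimage_eq_mul {(0:ℝ)} {((1:ℝ),(1:ℝ))}
      (measurableSet_singleton _) (measurableSet_singleton _)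
    have hpre1 : Z ⁻¹' {(0:ℝ)} = evEq Z 0 := rfl
    have hpre2 : (fun ω => (D1 ω, D0 ω)) ⁻¹' {((1:ℝ),(1:ℝ))} = A := by
      ext ω; simp [hA, ATset, Prod.ext_iff]
    rw [hpre1, hpre2, cond_apply hWwm, cond_apply hWwm, cond_apply hWwm] at h
    have hset1 : evEq W w ∩ (evEq Z 0 ∩ A) = A ∩ Sc := by
      rw [hSc]; ext ω
      simp only [Set.mem_inter_iff]; tauto
    have hset2 : evEq W w ∩ evEq Z 0 = Sc := by
      rw [hSc]; exact Set.inter_comm _ _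
    have hset3 : evEq W w ∩ A = A ∩ evEq W w := Set.inter_comm _ _
    rw [hset1, hset2, hset3] at h
    have hreal := congrArg ENNReal.toReal h
    rw [ENNReal.toReal_mul, ENNReal.toReal_mul, ENNReal.toReal_mul, ENNReal.toReal_mul,
      ENNReal.toReal_inv] at hreal
    rw [← hm, ← ha, ← hc, ← hb] at hreal
    field_simp at hreal ⊢
    nlinarith [hreal, hmpos]
  -- Final assembly
  have hintval : ∫ ω in Sc ∩ A, Y 1 0 ω ∂μ = a * cexp μ A (fun ω => Y 1 0 ω) := by
    have hp' : p ≠ 0 := ne_of_gt hppos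
    have : p⁻¹ * ∫ ω in Sc ∩ A, Y 1 0 ω ∂μ = p⁻¹ * a * cexp μ A (fun ω => Y 1 0 ω) := hmul
    field_simp at this
    linarith [this]
  rw [hintval, hD2]
  rw [prCond, pr, pr, ← hb, ← hm]
  field_simp
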